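/- Let C be a (strict) finite tensor category and A, B algebras in C. Then there are natural isomorphisms (i) Hom_B(M ⊗_A V, U) ≅ Hom_{(A,B)}(V, *M ⊗ U), (ii) Hom_A(M, X ⊗ N) ≅ Hom_C(M ⊗_A *N, X), and (iii) Hom_A(M, X ⊗ N) ≅ Hom_A(X* ⊗ M, N), for all X ∈ C, M, N ∈ C_A, V ∈ _AC_B, U ∈ C_B. -/

import Mathlib

/-!
Common framework: left/right module categories over a tensor category,
module functors, module natural transformations, pre-balancings and
module (co)ends, internal Homs, following Bortolussi–Mombelli,
"(co)ends for representations of tensor categories".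

Throughout, a *finite tensor category* is modelled as an abelian,
`k`-linear, monoidally preadditive/linear rigid monoidal category with
simple unit object (finiteness of the underlying abelian category is not
used in the statements below and is omitted).
-/

open CategoryTheory Category MonoidalCategory Opposite

universe w w₁ w₂ v u v₁ u₁ v₂ u₂ v₃ u₃ v₄ u₄

namespace TensorModuleEnd

variable (C : Type u) [Category.{v} C] [MonoidalCategory C]

/-- A left module category structure of a monoidal category `C` on a category `M`.
The action bifunctor is encoded as a functor `act : C ⥤ M ⥤ M`, with
`X ▷ m = (act.obj X).obj m`, together with coherent associativity and
unit isomorphisms (equations (1), (2) of the paper). -/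
structure LeftModuleStr (M : Type u₁) [Category.{v₁} M] where
  act : C ⥤ M ⥤ M
  assoc : ∀ (X Y : C) (m : M),
    (act.obj (X ⊗ Y)).obj m ≅ (act.obj X).obj ((act.obj Y).obj m)
  unitIso : ∀ (m : M), (act.obj (𝟙_ C)).obj m ≅ m
  assoc_natural_left : ∀ {X X' : C} (f : X ⟶ X') (Y : C) (m : M),
    (act.map (f ▷ Y)).app m ≫ (assoc X' Y m).hom =
      (assoc X Y m).hom ≫ (act.map f).app ((act.obj Y).obj m)
  assoc_natural_mid : ∀ (X : C) {Y Y' : C} (g : Y ⟶ Y') (m : M),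
    (act.map (X ◁ g)).app m ≫ (assoc X Y' m).hom =
      (assoc X Y m).hom ≫ (act.obj X).map ((act.map g).app m)
  assoc_natural_obj : ∀ (X Y : C) {m m' : M} (h : m ⟶ m'),
    (act.obj (X ⊗ Y)).map h ≫ (assoc X Y m').hom =
      (assoc X Y m).hom ≫ (act.obj X).map ((act.obj Y).map h)
  unit_natural : ∀ {m m' : M} (h : m ⟶ m'),
    (act.obj (𝟙_ C)).map h ≫ (unitIso m').hom = (unitIso m).hom ≫ h
  pentagon : ∀ (X Y Z : C) (m : M),
    (assoc (X ⊗ Y) Z m).hom ≫ (assoc X Y ((act.obj Z).obj m)).hom =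
      (act.map (α_ X Y Z).hom).app m ≫ (assoc X (Y ⊗ Z) m).hom ≫
        (act.obj X).map ((assoc Y Z m).hom)
  triangle : ∀ (X : C) (m : M),
    (assoc X (𝟙_ C) m).hom ≫ (act.obj X).map ((unitIso m).hom) =
      (act.map (ρ_ X).hom).app m

/-- A right module category structure of `C` on `M`; here `(act.obj X).obj m`
plays the role of `m ◁ X` (equations (11), (12) of the paper). -/
structure RightModuleStr (M : Type u₁) [Category.{v₁} M] where
  act : C ⥤ M ⥤ M
  assoc : ∀ (X Y : C) (m : M),
    (act.obj (X ⊗ Y)).obj m ≅ (act.obj Y).obj ((act.obj X).obj m)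
  unitIso : ∀ (m : M), (act.obj (𝟙_ C)).obj m ≅ m
  assoc_natural_left : ∀ {X X' : C} (f : X ⟶ X') (Y : C) (m : M),
    (act.map (f ▷ Y)).app m ≫ (assoc X' Y m).hom =
      (assoc X Y m).hom ≫ (act.obj Y).map ((act.map f).app m)
  assoc_natural_mid : ∀ (X : C) {Y Y' : C} (g : Y ⟶ Y') (m : M),
    (act.map (X ◁ g)).app m ≫ (assoc X Y' m).hom =
      (assoc X Y m).hom ≫ (act.map g).app ((act.obj X).obj m)
  assoc_natural_obj : ∀ (X Y : C) {m m' : M} (h : m ⟶ m'),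
    (act.obj (X ⊗ Y)).map h ≫ (assoc X Y m').hom =
      (assoc X Y m).hom ≫ (act.obj Y).map ((act.obj X).map h)
  unit_natural : ∀ {m m' : M} (h : m ⟶ m'),
    (act.obj (𝟙_ C)).map h ≫ (unitIso m').hom = (unitIso m).hom ≫ h
  pentagon : ∀ (X Y Z : C) (m : M),
    (act.map (α_ X Y Z).hom).app m ≫ (assoc X (Y ⊗ Z) m).hom ≫
        (assoc Y Z ((act.obj X).obj m)).hom =
      (assoc (X ⊗ Y) Z m).hom ≫ (act.obj Z).map ((assoc X Y m).hom)
  triangle : ∀ (X : C) (m : M),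
    (assoc (𝟙_ C) X m).hom ≫ (act.obj X).map ((unitIso m).hom) =
      (act.map (λ_ X).hom).app m

variable {C}

/-- A left module category `M` over `C` is *exact* if `P ▷ m` is projective in `M`
for every projective `P : C` and every `m : M`. -/
def LeftModuleStr.IsExact {M : Type u₁} [Category.{v₁} M] (ρ : LeftModuleStr C M) : Prop :=
  ∀ (P : C), Projective P → ∀ m : M, Projective ((ρ.act.obj P).obj m)

/-- A `C`-module functor `(F, c)` between left `C`-module categories
(equations (3), (4) of the paper). -/
structure ModuleFunctor {M : Type u₁} [Category.{v₁} M] {N : Type u₂} [Category.{v₂} N]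
    (ρ : LeftModuleStr C M) (σ : LeftModuleStr C N) where
  F : M ⥤ N
  str : ∀ (X : C) (m : M), F.obj ((ρ.act.obj X).obj m) ≅ (σ.act.obj X).obj (F.obj m)
  str_natural_obj : ∀ (X : C) {m m' : M} (h : m ⟶ m'),
    F.map ((ρ.act.obj X).map h) ≫ (str X m').hom =
      (str X m).hom ≫ (σ.act.obj X).map (F.map h)
  str_natural_tensor : ∀ {X X' : C} (f : X ⟶ X') (m : M),
    F.map ((ρ.act.map f).app m) ≫ (str X' m).hom =
      (str X m).hom ≫ (σ.act.map f).app (F.obj m)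
  pentagon : ∀ (X Y : C) (m : M),
    F.map ((ρ.assoc X Y m).hom) ≫ (str X ((ρ.act.obj Y).obj m)).hom ≫
        (σ.act.obj X).map ((str Y m).hom) =
      (str (X ⊗ Y) m).hom ≫ (σ.assoc X Y (F.obj m)).hom
  unit : ∀ (m : M),
    (str (𝟙_ C) m).hom ≫ (σ.unitIso (F.obj m)).hom = F.map ((ρ.unitIso m).hom)

/-- A module natural transformation between module functors (equation (5)). -/
def IsModuleNatTrans {M : Type u₁} [Category.{v₁} M] {N : Type u₂} [Category.{v₂} N]
    {ρ : LeftModuleStr C M} {σ : LeftModuleStr C N}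
    (F G : ModuleFunctor ρ σ) (θ : F.F ⟶ G.F) : Prop :=
  ∀ (X : C) (m : M),
    θ.app ((ρ.act.obj X).obj m) ≫ (G.str X m).hom =
      (F.str X m).hom ≫ (σ.act.obj X).map (θ.app m)

/-- The category `Fun_C(M, N)` of `C`-module functors and module natural
transformations. -/
instance moduleFunctorCategory {M : Type u₁} [Category.{v₁} M] {N : Type u₂} [Category.{v₂} N]
    (ρ : LeftModuleStr C M) (σ : LeftModuleStr C N) :
    Category (ModuleFunctor ρ σ) where
  Hom F G := { θ : F.F ⟶ G.F // IsModuleNatTrans F G θ }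
  id F := ⟨𝟙 F.F, by intro X m; simp⟩
  comp {F G H} θ θ' := ⟨θ.1 ≫ θ'.1, by
    intro X m
    have h1 := θ.2 X m
    have h2 := θ'.2 X m
    simp only [NatTrans.comp_app, Category.assoc, Functor.map_comp]
    rw [h2, reassoc_of% h1]⟩
  id_comp f := by apply Subtype.ext; simp
  comp_id f := by apply Subtype.ext; simp
  assoc f g h := by apply Subtype.ext; simp

section ModuleEnds

variable {M : Type u₁} [Category.{v₁} M] {A : Type u₂} [Category.{v₂} A]

/-- `S(f, g)` for a functor `S : Mᵒᵖ × M ⥤ A`, contravariant in the first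
variable: here `f : m' ⟶ m` and `g : n ⟶ n'`. -/
abbrev smap (S : Mᵒᵖ × M ⥤ A) {m m' n n' : M} (f : m' ⟶ m) (g : n ⟶ n') :
    S.obj (op m, n) ⟶ S.obj (op m', n') :=
  S.map ((f.op, g) : ((op m, n) : Mᵒᵖ × M) ⟶ (op m', n'))

variable [RightRigidCategory C]

/-- A *pre-balancing* for a functor `S : Mᵒᵖ × M ⥤ A`, where `M` is a left
`C`-module category: a family of natural isomorphisms
`β^X_{m,n} : S(m, X ▷ n) ≅ S(Xᘁ ▷ m, n)`. -/
structure PreBalancing (ρ : LeftModuleStr C M) (S : Mᵒᵖ × M ⥤ A) where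
  iso : ∀ (X : C) (m n : M),
    S.obj (op m, (ρ.act.obj X).obj n) ≅ S.obj (op ((ρ.act.obj Xᘁ).obj m), n)
  natural : ∀ (X : C) {m m' n n' : M} (f : m' ⟶ m) (g : n ⟶ n'),
    smap S f ((ρ.act.obj X).map g) ≫ (iso X m' n').hom =
      (iso X m n).hom ≫ smap S ((ρ.act.obj Xᘁ).map f) g
  natural_tensor : ∀ {X X' : C} (f : X ⟶ X') (m n : M),
    smap S (𝟙 m) ((ρ.act.map f).app n) ≫ (iso X' m n).hom =
      (iso X m n).hom ≫ smap S ((ρ.act.map (fᘁ)).app m) (𝟙 n)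

variable (ρ : LeftModuleStr C M) (S : Mᵒᵖ × M ⥤ A)

/-- The canonical morphism `(Xᘁ ⊗ X) ▷ m ⟶ m` induced by the evaluation
(and the unit isomorphism). -/
def evActHom (X : C) (m : M) : (ρ.act.obj (Xᘁ ⊗ X)).obj m ⟶ m :=
  (ρ.act.map (ε_ X Xᘁ)).app m ≫ (ρ.unitIso m).hom

/-- The canonical morphism `m ⟶ (X ⊗ Xᘁ) ▷ m` induced by the coevaluation. -/
def coevActHom (X : C) (m : M) : m ⟶ (ρ.act.obj (X ⊗ Xᘁ)).obj m :=
  (ρ.unitIso m).inv ≫ (ρ.act.map (η_ X Xᘁ)).app m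

variable {ρ S}

/-- A *wedge* for `(S, β)` relative to a class `P` of objects of `C`:
a dinatural family `π` satisfying the module-end compatibility (equation (5)
of Section 3 of the paper) for every `X` in `P`.  Taking `P = fun _ => True`
gives module-end wedges; taking `P = fun _ => False` gives ordinary wedges
(for the ordinary end); an intermediate `P` corresponds to restricting the
module structure to a tensor subcategory. -/
structure ModuleEndCone (β : PreBalancing ρ S) (P : C → Prop) where
  pt : A
  π : ∀ m : M, pt ⟶ S.obj (op m, m)
  dinatural : ∀ {m n : M} (f : m ⟶ n),
    π m ≫ smap S (𝟙 m) f = π n ≫ smap S f (𝟙 n)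
  compat : ∀ (X : C), P X → ∀ (m : M),
    π m ≫ smap S (evActHom ρ X m) (𝟙 m) =
      π ((ρ.act.obj X).obj m) ≫ (β.iso X ((ρ.act.obj X).obj m) m).hom ≫
        smap S ((ρ.assoc Xᘁ X m).hom) (𝟙 m)

/-- Universality: `E` is a *module end* of `(S, β)` (relative to `P`). -/
def IsModuleEnd {β : PreBalancing ρ S} {P : C → Prop} (E : ModuleEndCone β P) : Prop :=
  ∀ (E' : ModuleEndCone β P), ∃! h : E'.pt ⟶ E.pt, ∀ m : M, h ≫ E.π m = E'.π m

/-- A *cowedge* for `(S, β)` relative to `P` (for module coends,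
equation (6) of the paper). -/
structure ModuleCoendCocone (β : PreBalancing ρ S) (P : C → Prop) where
  pt : A
  ι : ∀ m : M, S.obj (op m, m) ⟶ pt
  dinatural : ∀ {m n : M} (f : m ⟶ n),
    smap S f (𝟙 m) ≫ ι m = smap S (𝟙 n) f ≫ ι n
  compat : ∀ (X : C), P X → ∀ (m : M),
    ι m = smap S (𝟙 m) (coevActHom ρ X m ≫ (ρ.assoc X Xᘁ m).hom) ≫
        (β.iso X m ((ρ.act.obj Xᘁ).obj m)).hom ≫ ι ((ρ.act.obj Xᘁ).obj m)

/-- Universality: `E` is a *module coend* of `(S, β)` (relative to `P`). -/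
def IsModuleCoend {β : PreBalancing ρ S} {P : C → Prop} (E : ModuleCoendCocone β P) : Prop :=
  ∀ (E' : ModuleCoendCocone β P), ∃! h : E.pt ⟶ E'.pt, ∀ m : M, E.ι m ≫ h = E'.ι m

end ModuleEnds

section InternalHom

variable {M : Type u₁} [Category.{v₁} M]

/-- Internal Hom data for a left `C`-module category: a bifunctor
`H : Mᵒᵖ × M ⥤ C` together with bijections
`(X ⟶ uhom(m,n)) ≃ (X ▷ m ⟶ n)` natural in all three variables. -/
structure InternalHom (ρ : LeftModuleStr C M) where
  H : Mᵒᵖ × M ⥤ C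
  repr : ∀ (X : C) (m n : M), (X ⟶ H.obj (op m, n)) ≃ ((ρ.act.obj X).obj m ⟶ n)
  repr_natural : ∀ {X X' : C} (f : X ⟶ X') (m n : M) (u : X' ⟶ H.obj (op m, n)),
    repr X m n (f ≫ u) = (ρ.act.map f).app m ≫ repr X' m n u
  repr_natural_m : ∀ (X : C) {m m' : M} (f : m' ⟶ m) (n : M)
      (u : X ⟶ H.obj (op m, n)),
    repr X m' n (u ≫ smap H f (𝟙 n)) = (ρ.act.obj X).map f ≫ repr X m n u
  repr_natural_n : ∀ (X : C) (m : M) {n n' : M} (g : n ⟶ n')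
      (u : X ⟶ H.obj (op m, n)),
    repr X m n' (u ≫ smap H (𝟙 m) g) = repr X m n u ≫ g

variable [RightRigidCategory C]

/-- Internal Hom data for the right `C`-module category `Mᵒᵖ` opposite to a left
`C`-module category `M` (with action `m̄ ◁ X = (Xᘁ ▷ m)‾`): a bifunctor
`H' : M × Mᵒᵖ ⥤ C` (with `H'.obj (m, op n) = uhom_{Mᵒᵖ}(m̄, n̄)`) together with
bijections `(X ⟶ uhom_{Mᵒᵖ}(m̄, n̄)) ≃ (m̄ ◁ X ⟶ n̄) = (n ⟶ Xᘁ ▷ m)`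
natural in all three variables. -/
structure OpInternalHom (ρ : LeftModuleStr C M) where
  H : M × Mᵒᵖ ⥤ C
  repr : ∀ (X : C) (m n : M), (X ⟶ H.obj (m, op n)) ≃ (n ⟶ (ρ.act.obj Xᘁ).obj m)
  repr_natural : ∀ {X X' : C} (f : X ⟶ X') (m n : M) (u : X' ⟶ H.obj (m, op n)),
    repr X m n (f ≫ u) = repr X' m n u ≫ (ρ.act.map (fᘁ)).app m
  repr_natural_m : ∀ (X : C) {m m' : M} (f : m ⟶ m') (n : M)
      (u : X ⟶ H.obj (m, op n)),
    repr X m' n (u ≫ H.map ((f, 𝟙 (op n)) : ((m, op n) : M × Mᵒᵖ) ⟶ (m', op n))) =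
      repr X m n u ≫ (ρ.act.obj Xᘁ).map f
  repr_natural_n : ∀ (X : C) (m : M) {n n' : M} (g : n' ⟶ n)
      (u : X ⟶ H.obj (m, op n)),
    repr X m n' (u ≫ H.map ((𝟙 m, g.op) : ((m, op n) : M × Mᵒᵖ) ⟶ (m, op n'))) =
      g ≫ repr X m n u

end InternalHom


/-! ### Algebras and modules internal to `C` -/

section Algebra

variable {C : Type u} [Category.{v} C] [MonoidalCategory C]

/-- A right module in `C` over an algebra `A` in `C`. -/
structure MRightMod (A : Mon C) where
  X : C
  act : X ⊗ A.X ⟶ X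
  act_one : (X ◁ (MonObj.one (X := A.X))) ≫ act = (ρ_ X).hom
  act_mul : (α_ X A.X A.X).hom ≫ (X ◁ (MonObj.mul (X := A.X))) ≫ act = (act ▷ A.X) ≫ act

variable [LeftRigidCategory C]

/-- The canonical left `A`-action `λ_{ᘁM} : A ⊗ ᘁM ⟶ ᘁM` on the left dual of a
right `A`-module `M` (equation (14) of the paper). -/
def dualAct (A : Mon C) (M : MRightMod A) : A.X ⊗ (ᘁ(M.X)) ⟶ (ᘁ(M.X)) :=
  (λ_ (A.X ⊗ (ᘁ(M.X)))).inv ≫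
    ((η_ (ᘁ(M.X)) M.X) ▷ (A.X ⊗ (ᘁ(M.X)))) ≫
      (α_ (ᘁ(M.X)) M.X (A.X ⊗ (ᘁ(M.X)))).hom ≫
        ((ᘁ(M.X)) ◁ ((α_ M.X A.X (ᘁ(M.X))).inv ≫ (M.act ▷ (ᘁ(M.X))) ≫
          (ε_ (ᘁ(M.X)) M.X))) ≫
          (ρ_ (ᘁ(M.X))).hom

/-- Morphisms of right `A`-modules. -/
def IsRightModHom {A : Mon C} (M N : MRightMod A) (f : M.X ⟶ N.X) : Prop :=
  M.act ≫ f = (f ▷ A.X) ≫ N.act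

/-- The category of right `A`-modules in `C`. -/
instance mRightModCategory (A : Mon C) : Category (MRightMod A) where
  Hom M N := { f : M.X ⟶ N.X // IsRightModHom M N f }
  id M := ⟨𝟙 M.X, by simp [IsRightModHom]⟩
  comp {M N O} f g := ⟨f.1 ≫ g.1, by
    have hf := f.2
    have hg := g.2
    simp only [IsRightModHom] at *
    rw [← Category.assoc, hf, Category.assoc, hg, ← comp_whiskerRight_assoc]⟩
  id_comp f := by apply Subtype.ext; simp
  comp_id f := by apply Subtype.ext; simp
  assoc f g h := by apply Subtype.ext; simp

end Algebra

/-- A bimodule in `C` over algebras `A`, `B` in `C`. -/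
structure MBimod {C : Type u} [Category.{v} C] [MonoidalCategory C] (A B : Mon C) where
  X : C
  actL : A.X ⊗ X ⟶ X
  actR : X ⊗ B.X ⟶ X
  actL_one : ((MonObj.one (X := A.X)) ▷ X) ≫ actL = (λ_ X).hom
  actL_mul : (α_ A.X A.X X).hom ≫ (A.X ◁ actL) ≫ actL = ((MonObj.mul (X := A.X)) ▷ X) ≫ actL
  actR_one : (X ◁ (MonObj.one (X := B.X))) ≫ actR = (ρ_ X).hom
  actR_mul : (α_ X B.X B.X).hom ≫ (X ◁ (MonObj.mul (X := B.X))) ≫ actR = (actR ▷ B.X) ≫ actR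
  middle : (actL ▷ B.X) ≫ actR = (α_ A.X X B.X).hom ≫ (A.X ◁ actR) ≫ actL


/-! ### Auxiliary lemmas -/

section AuxLemmas
set_option linter.unusedSectionVars false
variable {D : Type u₃} [Category.{v₃} D] [MonoidalCategory D]

lemma trhe_symm_comp_whiskerRight {X Y Y' Z Z' : D} [ExactPairing Y Y']
    (φ : X ⟶ Z ⊗ Y') (g : Z ⟶ Z') :
    (tensorRightHomEquiv X Y Y' Z').symm (φ ≫ g ▷ Y') =
      (tensorRightHomEquiv X Y Y' Z).symm φ ≫ g := by
  apply (tensorRightHomEquiv X Y Y' Z').injective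
  rw [Equiv.apply_symm_apply, tensorRightHomEquiv_naturality, Equiv.apply_symm_apply]

lemma epi_whiskerRight_of_epi {W T : D} (p : W ⟶ T) [Epi p] (B : D) [HasRightDual B] :
    Epi (p ▷ B) := by
  constructor
  intro Z a b hab
  apply (tensorRightHomEquiv T B (Bᘁ) Z).injective
  apply (cancel_epi p).1
  apply (tensorRightHomEquiv W B (Bᘁ) Z).symm.injective
  rw [tensorRightHomEquiv_symm_naturality, tensorRightHomEquiv_symm_naturality,
    Equiv.symm_apply_apply, Equiv.symm_apply_apply]
  exact hab

variable [LeftRigidCategory D]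


lemma dualAct_eval (A : Mon D) (M : MRightMod A) :
    (M.X ◁ dualAct A M) ≫ ε_ (ᘁ(M.X)) M.X =
      (α_ M.X A.X (ᘁ(M.X))).inv ≫ (M.act ▷ (ᘁ(M.X))) ≫ ε_ (ᘁ(M.X)) M.X := by
  have key : dualAct A M =
      (tensorLeftHomEquiv (A.X ⊗ (ᘁ(M.X))) (ᘁ(M.X)) M.X (𝟙_ D))
        ((α_ M.X A.X (ᘁ(M.X))).inv ≫ (M.act ▷ (ᘁ(M.X))) ≫ ε_ (ᘁ(M.X)) M.X) ≫
        (ρ_ (ᘁ(M.X))).hom := by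
    simp [dualAct, tensorLeftHomEquiv]
  rw [key]
  conv_rhs => rw [← (tensorLeftHomEquiv (A.X ⊗ (ᘁ(M.X))) (ᘁ(M.X)) M.X (𝟙_ D)).symm_apply_apply
      ((α_ M.X A.X (ᘁ(M.X))).inv ≫ (M.act ▷ (ᘁ(M.X))) ≫ ε_ (ᘁ(M.X)) M.X)]
  generalize (tensorLeftHomEquiv (A.X ⊗ (ᘁ(M.X))) (ᘁ(M.X)) M.X (𝟙_ D))
      ((α_ M.X A.X (ᘁ(M.X))).inv ≫ (M.act ▷ (ᘁ(M.X))) ≫ ε_ (ᘁ(M.X)) M.X) = χ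
  simp [tensorLeftHomEquiv, unitors_equal]




lemma mate_act_left (A : Mon D) (M : MRightMod A) {V U : D} (g : V ⟶ (ᘁ(M.X)) ⊗ U) :
    (α_ M.X A.X V).inv ≫ (M.act ▷ V) ≫ (tensorLeftHomEquiv V (ᘁ(M.X)) M.X U).symm g =
      (tensorLeftHomEquiv (A.X ⊗ V) (ᘁ(M.X)) M.X U).symm
        ((A.X ◁ g) ≫ (α_ A.X (ᘁ(M.X)) U).inv ≫ (dualAct A M ▷ U)) := by
  have w := dualAct_eval A M
  dsimp [tensorLeftHomEquiv]
  simp only [MonoidalCategory.whiskerLeft_comp, assoc]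
  slice_lhs 2 3 => rw [← whisker_exchange]
  slice_lhs 1 2 => rw [← associator_inv_naturality_right]
  slice_lhs 3 4 => rw [associator_inv_naturality_left]
  slice_rhs 3 4 => rw [associator_inv_naturality_middle]
  slice_rhs 4 5 => rw [← comp_whiskerRight, w, comp_whiskerRight, comp_whiskerRight]
  simp

lemma mate_act_right (A : Mon D) (N : MRightMod A) {Mx X : D} (h : Mx ⟶ X ⊗ N.X) :
    (tensorRightHomEquiv (Mx ⊗ A.X) (ᘁ(N.X)) N.X X).symm
        ((h ▷ A.X) ≫ (α_ X N.X A.X).hom ≫ (X ◁ N.act)) =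
      (α_ Mx A.X (ᘁ(N.X))).hom ≫ (Mx ◁ dualAct A N) ≫
        (tensorRightHomEquiv Mx (ᘁ(N.X)) N.X X).symm h := by
  have w := dualAct_eval A N
  dsimp [tensorRightHomEquiv]
  simp only [comp_whiskerRight, assoc]
  slice_rhs 2 3 => rw [whisker_exchange]
  slice_rhs 1 2 => rw [← associator_naturality_left]
  slice_rhs 3 4 => rw [associator_naturality_right]
  slice_rhs 4 5 => rw [← MonoidalCategory.whiskerLeft_comp, w,
    MonoidalCategory.whiskerLeft_comp, MonoidalCategory.whiskerLeft_comp]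
  slice_lhs 3 4 => rw [associator_naturality_middle]
  simp

lemma tlhe_symm_comp_whiskerLeft {X Y Y' Z Z' : D} [ExactPairing Y Y']
    (φ : X ⟶ Y ⊗ Z) (g : Z ⟶ Z') :
    (tensorLeftHomEquiv X Y Y' Z').symm (φ ≫ Y ◁ g) =
      (tensorLeftHomEquiv X Y Y' Z).symm φ ≫ g := by
  apply (tensorLeftHomEquiv X Y Y' Z').injective
  rw [Equiv.apply_symm_apply, tensorLeftHomEquiv_naturality, Equiv.apply_symm_apply]

lemma mate_right_dual {Mx Nx Ax X : D} [HasRightDual X] (h : Mx ⟶ X ⊗ Nx)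
    (nact : Nx ⊗ Ax ⟶ Nx) :
    (tensorLeftHomEquiv (Mx ⊗ Ax) X (Xᘁ) Nx).symm
        ((h ▷ Ax) ≫ (α_ X Nx Ax).hom ≫ (X ◁ nact)) =
      (α_ (Xᘁ) Mx Ax).inv ≫ ((tensorLeftHomEquiv Mx X (Xᘁ) Nx).symm h ▷ Ax) ≫ nact := by
  rw [← assoc, tlhe_symm_comp_whiskerLeft]
  have t := tensorLeftHomEquiv_tensor (Y' := (Xᘁ)) h (𝟙 Ax)
  simp only [tensorHom_id] at t
  rw [t, assoc]

lemma fact_i_A (A : Mon D) (M : MRightMod A) {V U : D} (w : A.X ⊗ V ⟶ V)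
    (g : V ⟶ (ᘁ(M.X)) ⊗ U) :
    ((α_ M.X A.X V).inv ≫ (M.act ▷ V) ≫ (tensorLeftHomEquiv V (ᘁ(M.X)) M.X U).symm g
      = (M.X ◁ w) ≫ (tensorLeftHomEquiv V (ᘁ(M.X)) M.X U).symm g)
    ↔ (w ≫ g = (A.X ◁ g) ≫ (α_ A.X (ᘁ(M.X)) U).inv ≫ (dualAct A M ▷ U)) := by
  rw [mate_act_left A M g, ← tensorLeftHomEquiv_symm_naturality,
    Equiv.apply_eq_iff_eq]
  exact eq_comm

lemma fact_i_B {Mx V U B' : D} [HasLeftDual Mx] (w : V ⊗ B' ⟶ V) (uact : U ⊗ B' ⟶ U)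
    (g : V ⟶ (ᘁMx) ⊗ U) :
    ((α_ Mx V B').hom ≫ (Mx ◁ w) ≫ (tensorLeftHomEquiv V (ᘁMx) Mx U).symm g
        = (((tensorLeftHomEquiv V (ᘁMx) Mx U).symm g) ▷ B') ≫ uact)
    ↔ (w ≫ g = (g ▷ B') ≫ (α_ (ᘁMx) U B').hom ≫ ((ᘁMx) ◁ uact)) := by
  have h1 : (tensorLeftHomEquiv (V ⊗ B') (ᘁMx) Mx U).symm (w ≫ g)
      = Mx ◁ w ≫ (tensorLeftHomEquiv V (ᘁMx) Mx U).symm g :=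
    tensorLeftHomEquiv_symm_naturality w g
  have h2 : (tensorLeftHomEquiv (V ⊗ B') (ᘁMx) Mx U).symm
        ((g ▷ B') ≫ (α_ (ᘁMx) U B').hom ≫ ((ᘁMx) ◁ uact))
      = (α_ Mx V B').inv ≫ (((tensorLeftHomEquiv V (ᘁMx) Mx U).symm g) ▷ B') ≫ uact := by
    rw [← assoc, tlhe_symm_comp_whiskerLeft]
    have t := tensorLeftHomEquiv_tensor (Y' := Mx) g (𝟙 B')
    simp only [tensorHom_id] at t
    rw [t, assoc]
  rw [← Equiv.apply_eq_iff_eq (tensorLeftHomEquiv (V ⊗ B') (ᘁMx) Mx U).symm, h1, h2,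
    Iso.eq_inv_comp]

lemma fact_ii (A : Mon D) (N : MRightMod A) {Mx X : D} (mact : Mx ⊗ A.X ⟶ Mx)
    (h : Mx ⟶ X ⊗ N.X) :
    (mact ≫ h = (h ▷ A.X) ≫ (α_ X N.X A.X).hom ≫ (X ◁ N.act)) ↔
    ((α_ Mx A.X (ᘁ(N.X))).inv ≫ (mact ▷ (ᘁ(N.X))) ≫
        (tensorRightHomEquiv Mx (ᘁ(N.X)) N.X X).symm h
      = (Mx ◁ dualAct A N) ≫ (tensorRightHomEquiv Mx (ᘁ(N.X)) N.X X).symm h) := by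
  rw [← Equiv.apply_eq_iff_eq (tensorRightHomEquiv (Mx ⊗ A.X) (ᘁ(N.X)) N.X X).symm,
    tensorRightHomEquiv_symm_naturality, mate_act_right, Iso.inv_comp_eq]

lemma fact_iii {Mx Nx Ax X : D} [HasRightDual X] (mact : Mx ⊗ Ax ⟶ Mx)
    (nact : Nx ⊗ Ax ⟶ Nx) (h : Mx ⟶ X ⊗ Nx) :
    (mact ≫ h = (h ▷ Ax) ≫ (α_ X Nx Ax).hom ≫ (X ◁ nact)) ↔
    ((α_ (Xᘁ) Mx Ax).hom ≫ ((Xᘁ) ◁ mact) ≫ (tensorLeftHomEquiv Mx X (Xᘁ) Nx).symm h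
      = (((tensorLeftHomEquiv Mx X (Xᘁ) Nx).symm h) ▷ Ax) ≫ nact) := by
  rw [← Equiv.apply_eq_iff_eq (tensorLeftHomEquiv (Mx ⊗ Ax) X (Xᘁ) Nx).symm,
    tensorLeftHomEquiv_symm_naturality, mate_right_dual, Iso.eq_inv_comp]



end AuxLemmas

/-!
## STATEMENT 0

(Lemma 2.2 of the paper.)  For algebras `A`, `B` in a finite tensor category
`C`, right `A`-modules `M, N`, an `(A,B)`-bimodule `V` and a right `B`-module
`U`, there are natural isomorphisms

 (i)  `Hom_B(M ⊗_A V, U) ≅ Hom_{(A,B)}(V, ᘁM ⊗ U)`,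
 (ii) `Hom_A(M, X ⊗ N) ≅ Hom_C(M ⊗_A ᘁN, X)`,
 (iii) `Hom_A(M, X ⊗ N) ≅ Hom_A(Xᘁ ⊗ M, N)`.

The relative tensor products are hypothesised via their universal (coequalizer)
property, and the isomorphisms are realised by the explicit canonical maps
`Φ` (formula (15)), `Ψ` (formula (22)) and the rigidity adjunction.
-/

variable {k : Type w} [Field k]

theorem statement0
    {C : Type u} [Category.{v} C] [Abelian C] [CategoryTheory.Linear k C]
    [MonoidalCategory C] [MonoidalPreadditive C] [MonoidalLinear k C]
    [RigidCategory C] [Simple (𝟙_ C)]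
    (A B : Mon C) (M N : MRightMod A) (V : MBimod A B) (U : MRightMod B)
    -- the relative tensor product `T = M ⊗_A V`, with its right `B`-action:
    (T : C) (piT : M.X ⊗ V.X ⟶ T)
    (hcoeq : (α_ M.X A.X V.X).inv ≫ (M.act ▷ V.X) ≫ piT = (M.X ◁ V.actL) ≫ piT)
    (huniv : ∀ {Z : C} (h : M.X ⊗ V.X ⟶ Z),
      ((α_ M.X A.X V.X).inv ≫ (M.act ▷ V.X) ≫ h = (M.X ◁ V.actL) ≫ h) →
        ∃! g : T ⟶ Z, piT ≫ g = h)
    (ρT : T ⊗ B.X ⟶ T)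
    (hρT : (piT ▷ B.X) ≫ ρT = (α_ M.X V.X B.X).hom ≫ (M.X ◁ V.actR) ≫ piT)
    -- the relative tensor product `T₂ = M ⊗_A ᘁN`:
    (T₂ : C) (piT₂ : M.X ⊗ (ᘁ(N.X)) ⟶ T₂)
    (hcoeq₂ : (α_ M.X A.X (ᘁ(N.X))).inv ≫ (M.act ▷ (ᘁ(N.X))) ≫ piT₂ =
      (M.X ◁ dualAct A N) ≫ piT₂)
    (huniv₂ : ∀ {Z : C} (h : M.X ⊗ (ᘁ(N.X)) ⟶ Z),
      ((α_ M.X A.X (ᘁ(N.X))).inv ≫ (M.act ▷ (ᘁ(N.X))) ≫ h =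
        (M.X ◁ dualAct A N) ≫ h) → ∃! g : T₂ ⟶ Z, piT₂ ≫ g = h) :
    -- (i) `Hom_B(M ⊗_A V, U) ≅ Hom_{(A,B)}(V, ᘁM ⊗ U)`, via
    -- `Φ(f) = (id_{ᘁM} ⊗ (f ∘ π)) ∘ (coev_M ⊗ id_V)`:
    (∃ e : { f : T ⟶ U.X // ρT ≫ f = (f ▷ B.X) ≫ U.act } ≃
        { g : V.X ⟶ (ᘁ(M.X)) ⊗ U.X //
          V.actL ≫ g =
            (A.X ◁ g) ≫ (α_ A.X (ᘁ(M.X)) U.X).inv ≫ (dualAct A M ▷ U.X) ∧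
          V.actR ≫ g =
            (g ▷ B.X) ≫ (α_ (ᘁ(M.X)) U.X B.X).hom ≫ ((ᘁ(M.X)) ◁ U.act) },
      ∀ f, (e f).1 =
        (λ_ V.X).inv ≫ ((η_ (ᘁ(M.X)) M.X) ▷ V.X) ≫
          (α_ (ᘁ(M.X)) M.X V.X).hom ≫ ((ᘁ(M.X)) ◁ (piT ≫ f.1))) ∧
    -- (ii) `Hom_A(M, X ⊗ N) ≅ Hom_C(M ⊗_A ᘁN, X)`, naturally in `X`, with
    -- inverse `Ψ(α) = ((α ∘ π) ⊗ id_N) ∘ (id_M ⊗ coev_N)`: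
    (∃ e₂ : ∀ X : C,
        { h : M.X ⟶ X ⊗ N.X //
          M.act ≫ h = (h ▷ A.X) ≫ (α_ X N.X A.X).hom ≫ (X ◁ N.act) } ≃
          (T₂ ⟶ X),
      ∀ (X : C) (α : T₂ ⟶ X),
        ((e₂ X).symm α).1 =
          (ρ_ M.X).inv ≫ (M.X ◁ (η_ (ᘁ(N.X)) N.X)) ≫
            (α_ M.X (ᘁ(N.X)) N.X).inv ≫ ((piT₂ ≫ α) ▷ N.X)) ∧
    -- (iii) `Hom_A(M, X ⊗ N) ≅ Hom_A(Xᘁ ⊗ M, N)`, naturally in `X`, via the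
    -- rigidity adjunction:
    (∃ e₃ : ∀ X : C,
        { h : M.X ⟶ X ⊗ N.X //
          M.act ≫ h = (h ▷ A.X) ≫ (α_ X N.X A.X).hom ≫ (X ◁ N.act) } ≃
          { u : (Xᘁ) ⊗ M.X ⟶ N.X //
            (α_ (Xᘁ) M.X A.X).hom ≫ ((Xᘁ) ◁ M.act) ≫ u = (u ▷ A.X) ≫ N.act },
      ∀ (X : C) (h : { h : M.X ⟶ X ⊗ N.X //
          M.act ≫ h = (h ▷ A.X) ≫ (α_ X N.X A.X).hom ≫ (X ◁ N.act) }),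
        ((e₃ X) h).1 =
          ((Xᘁ) ◁ h.1) ≫ (α_ (Xᘁ) X N.X).inv ≫
            ((ε_ X (Xᘁ)) ▷ N.X) ≫ (λ_ N.X).hom) := by
  have epiT : Epi piT := ⟨fun {Z} a b hab => by
    obtain ⟨g, -, hu⟩ := huniv (piT ≫ a) (by rw [reassoc_of% hcoeq])
    rw [hu a rfl, hu b hab.symm]⟩
  haveI : Epi (piT ▷ B.X) := epi_whiskerRight_of_epi piT B.X
  refine ⟨?_, ?_, ?_⟩
  · -- (i)
    refine ⟨⟨fun f => ⟨(tensorLeftHomEquiv V.X (ᘁ(M.X)) M.X U.X) (piT ≫ f.1), ?_, ?_⟩,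
      fun g => ⟨(huniv ((tensorLeftHomEquiv V.X (ᘁ(M.X)) M.X U.X).symm g.1)
        ((fact_i_A A M V.actL g.1).mpr g.2.1)).choose, ?_⟩, ?_, ?_⟩, fun f => rfl⟩
    · refine (fact_i_A A M V.actL _).mp ?_
      rw [Equiv.symm_apply_apply, reassoc_of% hcoeq]
    · refine (fact_i_B V.actR U.act _).mp ?_
      rw [Equiv.symm_apply_apply, comp_whiskerRight, assoc, ← f.2, reassoc_of% hρT]
    · have hfac := (huniv ((tensorLeftHomEquiv V.X (ᘁ(M.X)) M.X U.X).symm g.1)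
        ((fact_i_A A M V.actL g.1).mpr g.2.1)).choose_spec.1
      rw [← cancel_epi (piT ▷ B.X), reassoc_of% hρT, ← comp_whiskerRight_assoc, hfac,
        (fact_i_B V.actR U.act g.1).mpr g.2.2]
    · intro f
      apply Subtype.ext
      refine ((huniv ((tensorLeftHomEquiv V.X (ᘁ(M.X)) M.X U.X).symm
          ((tensorLeftHomEquiv V.X (ᘁ(M.X)) M.X U.X) (piT ≫ f.1)))
          (by rw [Equiv.symm_apply_apply, reassoc_of% hcoeq])).choose_spec.2 f.1
          (by rw [Equiv.symm_apply_apply])).symm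
    · intro g
      apply Subtype.ext
      dsimp only
      rw [(huniv ((tensorLeftHomEquiv V.X (ᘁ(M.X)) M.X U.X).symm g.1)
        ((fact_i_A A M V.actL g.1).mpr g.2.1)).choose_spec.1, Equiv.apply_symm_apply]
  · -- (ii)
    refine ⟨fun X => ⟨fun h => (huniv₂ ((tensorRightHomEquiv M.X (ᘁ(N.X)) N.X X).symm h.1)
        ((fact_ii A N M.act h.1).mp h.2)).choose,
      fun α => ⟨(tensorRightHomEquiv M.X (ᘁ(N.X)) N.X X) (piT₂ ≫ α), ?_⟩, ?_, ?_⟩,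
      fun X α => rfl⟩
    · refine (fact_ii A N M.act _).mpr ?_
      rw [Equiv.symm_apply_apply, reassoc_of% hcoeq₂]
    · intro h
      apply Subtype.ext
      dsimp only
      rw [(huniv₂ ((tensorRightHomEquiv M.X (ᘁ(N.X)) N.X X).symm h.1)
        ((fact_ii A N M.act h.1).mp h.2)).choose_spec.1, Equiv.apply_symm_apply]
    · intro α
      refine ((huniv₂ ((tensorRightHomEquiv M.X (ᘁ(N.X)) N.X X).symm
          ((tensorRightHomEquiv M.X (ᘁ(N.X)) N.X X) (piT₂ ≫ α)))
          (by rw [Equiv.symm_apply_apply, reassoc_of% hcoeq₂])).choose_spec.2 α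
          (by rw [Equiv.symm_apply_apply])).symm
  · -- (iii)
    refine ⟨fun X => ⟨fun h => ⟨(tensorLeftHomEquiv M.X X (Xᘁ) N.X).symm h.1,
        (fact_iii M.act N.act h.1).mp h.2⟩,
      fun u => ⟨(tensorLeftHomEquiv M.X X (Xᘁ) N.X) u.1,
        (fact_iii M.act N.act _).mpr (by rw [Equiv.symm_apply_apply]; exact u.2)⟩,
      fun h => Subtype.ext (by dsimp only; rw [Equiv.apply_symm_apply]),
      fun u => Subtype.ext (by dsimp only; rw [Equiv.symm_apply_apply])⟩,
      fun X h => rfl⟩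

end TensorModuleEnd
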